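/- Let r ≥ 1 and let (q₁(0), q₁(1), ..., q_r(0), q_r(1)) be a finite sequence of elements of some set, indexed by pairs (j,i) with j ∈ {1,...,r} and i ∈ {0,1}. Suppose the sequence does not have the uniqueness property, i.e., every value attained by the sequence is attained at least twice. Then there exists a function κ : {1,...,r} → {0,1} such that the set {q_j(κ(j)) : j ∈ {1,...,r}}, the set {q_j(1−κ(j)) : j ∈ {1,...,r}}, and the set of all values {q_j(i) : j ∈ {1,...,r}, i ∈ {0,1}} are all equal. -/
import Mathlib

namespace HallTwo

variable {α : Type*} {r : ℕ}

def pt (p : Fin r × Fin 2) : Fin r × Fin 2 := (p.1, 1 - p.2)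

def pv (q : Fin r → Fin 2 → α) (p : Fin r × Fin 2) : α := q p.1 p.2

lemma fin2_sub_sub (i : Fin 2) : 1 - (1 - i) = i := by revert i; decide

lemma fin2_sub_ne (i : Fin 2) : 1 - i ≠ i := by revert i; decide

lemma pt_pt (p : Fin r × Fin 2) : pt (pt p) = p := by
  obtain ⟨j, i⟩ := p
  simp only [pt]
  exact Prod.ext rfl (fin2_sub_sub i)

@[simp] lemma pt_fst (p : Fin r × Fin 2) : (pt p).1 = p.1 := rfl

lemma pt_ne (p : Fin r × Fin 2) : pt p ≠ p := by
  intro h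
  exact fin2_sub_ne p.2 (congrArg Prod.snd h)

lemma same_edge {p p' : Fin r × Fin 2} (h : p'.1 = p.1) : p' = p ∨ p' = pt p := by
  obtain ⟨j, i⟩ := p
  obtain ⟨j', i'⟩ := p'
  simp only at h
  subst h
  have : i' = i ∨ i' = 1 - i := by revert i i'; decide
  rcases this with h | h
  · exact Or.inl (by rw [h])
  · exact Or.inr (by rw [h]; rfl)

/-- A "good chain": a trail in the multigraph, either closed, or open with both
loose value-ends already covered (in `C`). -/
structure GoodChain (q : Fin r → Fin 2 → α) (s : Finset (Fin r)) (C : Set α)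
    (u : ℕ → Fin r × Fin 2) (m : ℕ) : Prop where
  pos : 1 ≤ m
  mem : ∀ t < m, (u t).1 ∈ s
  inj : ∀ t < m, ∀ t' < m, (u t).1 = (u t').1 → t = t'
  link : ∀ t, t + 1 < m → pv q (pt (u (t + 1))) = pv q (u t)
  ends : pv q (pt (u 0)) = pv q (u (m - 1)) ∨
    (pv q (pt (u 0)) ∈ C ∧ pv q (u (m - 1)) ∈ C)

/-- Extraction of a conflict-free closed chain from a linked sequence with a conflict. -/
lemma extract (q : Fin r → Fin 2 → α) (s : Finset (Fin r)) (C : Set α)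
    (u : ℕ → Fin r × Fin 2) (N d₀ : ℕ)
    (mem : ∀ k < N, (u k).1 ∈ s)
    (link : ∀ k, k + 1 < N → pv q (pt (u (k + 1))) = pv q (u k))
    (noadj : ∀ k, k + 1 < N → u (k + 1) ≠ pt (u k))
    (nodup : ∀ d' a' i j, 1 ≤ d' → d' ≤ d₀ → a' + d' < N →
        a' + 1 ≤ i → i < j → j ≤ a' + d' - 1 → u i ≠ u j)
    (conf : ∃ a, 1 ≤ d₀ ∧ a + d₀ < N ∧ u (a + d₀) = pt (u a)) :
    ∃ u' m', GoodChain q s C u' m' := by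
  classical
  have hex : ∃ d, ∃ a, 1 ≤ d ∧ a + d < N ∧ u (a + d) = pt (u a) := ⟨d₀, conf⟩
  set d := Nat.find hex with hdd
  obtain ⟨a, hd1, hdN, hconf⟩ := Nat.find_spec hex
  have hdmin : ∀ d' a', 1 ≤ d' → a' + d' < N → u (a' + d') = pt (u a') → d ≤ d' := by
    intro d' a' h1 h2 h3
    exact Nat.find_min' hex ⟨a', h1, h2, h3⟩
  have hdd0 : d ≤ d₀ := Nat.find_min' hex conf
  have hd2 : 2 ≤ d := by
    rcases Nat.lt_or_ge d 2 with h | h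
    · exfalso
      have hd1' : d = 1 := by omega
      apply noadj a (by omega)
      have : a + d = a + 1 := by omega
      rw [← this]; exact hconf
    · exact h
  refine ⟨fun t => u (a + 1 + t), d - 1, by omega, ?_, ?_, ?_, ?_⟩
  · intro t ht
    exact mem _ (by omega)
  · -- injectivity of edges
    intro t ht t' ht' hedge
    by_contra hne
    rcases same_edge hedge with heq | heq
    · -- equal positions
      rcases Nat.lt_or_ge t t' with hlt | hge
      · exact nodup d a (a + 1 + t) (a + 1 + t') hd1 hdd0 hdN (by omega) (by omega) (by omega)
          heq
      · have hlt : t' < t := by omega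
        exact nodup d a (a + 1 + t') (a + 1 + t) hd1 hdd0 hdN (by omega) (by omega) (by omega)
          heq.symm
    · -- conflict inside: contradiction with minimality
      rcases Nat.lt_or_ge t t' with hlt | hge
      · have heq' : u (a + 1 + t') = pt (u (a + 1 + t)) := by
          rw [heq, pt_pt]
        have : d ≤ t' - t := by
          apply hdmin (t' - t) (a + 1 + t) (by omega) (by omega)
          have he : a + 1 + t + (t' - t) = a + 1 + t' := by omega
          rw [he]; exact heq'
        omega
      · have hlt : t' < t := by omega
        have : d ≤ t - t' := by
          apply hdmin (t - t') (a + 1 + t') (by omega) (by omega)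
          have he : a + 1 + t' + (t - t') = a + 1 + t := by omega
          rw [he]; exact heq
        omega
  · intro t ht
    exact link (a + 1 + t) (by omega)
  · left
    have h1 : pv q (pt (u (a + 1))) = pv q (u a) := link a (by omega)
    have h2 : pv q (pt (u (a + d))) = pv q (u (a + d - 1)) := by
      have := link (a + d - 1) (by omega)
      have he : a + d - 1 + 1 = a + d := by omega
      rw [he] at this; exact this
    have h3 : pt (u (a + d)) = u a := by rw [hconf, pt_pt]
    have he2 : a + 1 + (d - 1 - 1) = a + d - 1 := by omega
    calc pv q (pt (u (a + 1 + 0))) = pv q (u a) := by rw [Nat.add_zero]; exact h1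
      _ = pv q (pt (u (a + d))) := by rw [h3]
      _ = pv q (u (a + d - 1)) := h2
      _ = pv q (u (a + 1 + (d - 1 - 1))) := by rw [he2]


/-- Existence of a good chain, via a choice-based walk. -/
lemma exists_goodChain (q : Fin r → Fin 2 → α) (s : Finset (Fin r)) (C : Set α)
    (H1 : ∀ j ∈ s, ∀ i, q j i ∉ C →
      ∃ p' : Fin r × Fin 2, p'.1 ∈ s ∧ p' ≠ (j, i) ∧ q p'.1 p'.2 = q j i)
    (NE : ∃ p : Fin r × Fin 2, p.1 ∈ s ∧ pv q p ∉ C) :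
    ∃ u m, GoodChain q s C u m := by
  classical
  -- the one-step function of the walk
  have hch : ∀ p : Fin r × Fin 2, p.1 ∈ s → pv q p ∉ C →
      ∃ p' : Fin r × Fin 2, p'.1 ∈ s ∧ p' ≠ p ∧ pv q p' = pv q p := by
    intro p hp hc
    obtain ⟨p', h1, h2, h3⟩ := H1 p.1 hp p.2 hc
    exact ⟨p', h1, by simpa using h2, h3⟩
  set next : (Fin r × Fin 2) → (Fin r × Fin 2) := fun p =>
    if h : p.1 ∈ s ∧ pv q p ∉ C then pt (Classical.choose (hch p h.1 h.2)) else p with hnextdef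
  have hnext : ∀ p : Fin r × Fin 2, p.1 ∈ s → pv q p ∉ C →
      (next p).1 ∈ s ∧ pv q (pt (next p)) = pv q p ∧ pt (next p) ≠ p := by
    intro p hp hc
    have h : p.1 ∈ s ∧ pv q p ∉ C := ⟨hp, hc⟩
    obtain ⟨h1, h2, h3⟩ := Classical.choose_spec (hch p h.1 h.2)
    have he : next p = pt (Classical.choose (hch p h.1 h.2)) := by
      rw [hnextdef]; simp only [dif_pos h]
    rw [he, pt_pt]
    exact ⟨h1, h3, h2⟩
  -- choose the starting point
  have hstart : ∃ w : Fin r × Fin 2, (w.1 ∈ s ∧ pv q w ∉ C) ∧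
      (pv q (pt w) ∈ C ∨ ∀ p : Fin r × Fin 2, p.1 ∈ s → pv q p ∉ C → pv q (pt p) ∉ C) := by
    by_cases hc1 : ∃ w : Fin r × Fin 2, (w.1 ∈ s ∧ pv q w ∉ C) ∧ pv q (pt w) ∈ C
    · obtain ⟨w, h1, h2⟩ := hc1
      exact ⟨w, h1, Or.inl h2⟩
    · obtain ⟨w, h1⟩ := NE
      push_neg at hc1
      exact ⟨w, h1, Or.inr (fun p hp hc => hc1 p ⟨hp, hc⟩)⟩
  obtain ⟨w, ⟨hw1, hw2⟩, hwalt⟩ := hstart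
  set v : ℕ → Fin r × Fin 2 := fun k => next^[k] w with hvdef
  have hv0 : v 0 = w := rfl
  have hvs : ∀ k, v (k + 1) = next (v k) := by
    intro k
    rw [hvdef]
    exact Function.iterate_succ_apply' next k w
  -- edges stay in s as long as values stay uncovered
  have hedges : ∀ k, (∀ l < k, pv q (v l) ∉ C) → (v k).1 ∈ s := by
    intro k
    induction k with
    | zero => intro _; exact hw1
    | succ n ih =>
      intro hl
      have h1 : (v n).1 ∈ s := ih (fun l hl' => hl l (by omega))
      have h2 : pv q (v n) ∉ C := hl n (by omega)
      rw [hvs n]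
      exact (hnext (v n) h1 h2).1
  by_cases hstop : ∃ k, pv q (v k) ∈ C
  · -- the walk stops: open chain
    set K := Nat.find hstop with hKdef
    have hK : pv q (v K) ∈ C := Nat.find_spec hstop
    have hKmin : ∀ l < K, pv q (v l) ∉ C := fun l hl => Nat.find_min hstop hl
    have hK1 : 1 ≤ K := by
      rcases Nat.eq_zero_or_pos K with h | h
      · exfalso; rw [h, hv0] at hK; exact hw2 hK
      · exact h
    have hmem : ∀ k < K + 1, (v k).1 ∈ s := by
      intro k hk
      exact hedges k (fun l hl => hKmin l (by omega))
    have hlink : ∀ k, k + 1 < K + 1 → pv q (pt (v (k + 1))) = pv q (v k) := by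
      intro k hk
      rw [hvs k]
      exact (hnext (v k) (hmem k (by omega)) (hKmin k (by omega))).2.1
    have hnoadj : ∀ k, k + 1 < K + 1 → v (k + 1) ≠ pt (v k) := by
      intro k hk heq
      have := (hnext (v k) (hmem k (by omega)) (hKmin k (by omega))).2.2
      rw [← hvs k] at this
      rw [heq, pt_pt] at this
      exact this rfl
    have hnodup : ∀ i j, i < j → j ≤ K → v i ≠ v j := by
      intro i j hij hj heq
      have hiter : ∀ t, v (i + t) = v (j + t) := by
        intro t
        rw [hvdef]
        simp only
        rw [Nat.add_comm i t, Nat.add_comm j t,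
          Function.iterate_add_apply, Function.iterate_add_apply]
        rw [hvdef] at heq
        simp only at heq
        rw [heq]
      have h2 := hiter (K - j)
      have he : j + (K - j) = K := by omega
      rw [he] at h2
      have : pv q (v (i + (K - j))) ∉ C := hKmin _ (by omega)
      rw [h2] at this
      exact this hK
    -- start condition
    have hstartC : pv q (pt w) ∈ C := by
      rcases hwalt with h | h
      · exact h
      · exfalso
        have h1 : (pt (v K)).1 ∈ s := by
          rw [pt_fst]
          have := hlink (K - 1) (by omega)
          exact hmem K (by omega)
        have h2 : pv q (pt (v K)) ∉ C := by
          have hl := hlink (K - 1) (by omega)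
          have he : K - 1 + 1 = K := by omega
          rw [he] at hl
          rw [hl]
          exact hKmin (K - 1) (by omega)
        have := h (pt (v K)) h1 h2
        rw [pt_pt] at this
        exact this hK
    by_cases hconf : ∃ d' a', 1 ≤ d' ∧ a' + d' < K + 1 ∧ v (a' + d') = pt (v a')
    · obtain ⟨d', a', h1, h2, h3⟩ := hconf
      exact extract q s C v (K + 1) d' hmem hlink hnoadj
        (fun e b i j _ _ hb hi hij hj => hnodup i j hij (by omega)) ⟨a', h1, h2, h3⟩
    · push_neg at hconf
      refine ⟨v, K + 1, by omega, hmem, ?_, hlink, ?_⟩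
      · intro t ht t' ht' hedge
        by_contra hne
        rcases same_edge hedge with heq | heq
        · rcases Nat.lt_or_ge t t' with hlt | hge
          · exact hnodup t t' hlt (by omega) heq
          · exact hnodup t' t (by omega) (by omega) heq.symm
        · rcases Nat.lt_or_ge t t' with hlt | hge
          · apply hconf (t' - t) t (by omega) (by omega)
            have he : t + (t' - t) = t' := by omega
            rw [he, heq, pt_pt]
          · have hlt : t' < t := by omega
            apply hconf (t - t') t' (by omega) (by omega)
            have he : t' + (t - t') = t := by omega
            rw [he]
            exact heq
      · right
        constructor
        · rw [hv0]; exact hstartC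
        · simpa using hK
  · -- the walk never stops: closed chain
    push_neg at hstop
    have hmem : ∀ k, (v k).1 ∈ s := fun k => hedges k (fun l _ => hstop l)
    have hlink : ∀ k, pv q (pt (v (k + 1))) = pv q (v k) := by
      intro k
      rw [hvs k]
      exact (hnext (v k) (hmem k) (hstop k)).2.1
    have hnoadj : ∀ k, v (k + 1) ≠ pt (v k) := by
      intro k heq
      have := (hnext (v k) (hmem k) (hstop k)).2.2
      rw [← hvs k, heq, pt_pt] at this
      exact this rfl
    obtain ⟨x, y, hxy, hvxy⟩ := Finite.exists_ne_map_eq_of_infinite v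
    have hexb : ∃ b, ∃ a, a < b ∧ v a = v b := by
      rcases Nat.lt_or_ge x y with h | h
      · exact ⟨y, x, h, hvxy⟩
      · exact ⟨x, y, by omega, hvxy.symm⟩
    set b := Nat.find hexb with hbdef
    obtain ⟨a, hab, hvab⟩ := Nat.find_spec hexb
    have hbd : ∀ i j, i < j → j < b → v i ≠ v j := by
      intro i j hij hj heq
      exact Nat.find_min hexb hj ⟨i, hij, heq⟩
    set m := b - a with hmdef
    have hm : 1 ≤ m := by omega
    set U : ℕ → Fin r × Fin 2 := fun k => v (a + k % m) with hUdef
    have hUv : ∀ t < m, U t = v (a + t) := by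
      intro t ht
      rw [hUdef]
      simp only
      rw [Nat.mod_eq_of_lt ht]
    have hmodsucc : ∀ k, (k + 1) % m = if k % m + 1 = m then 0 else k % m + 1 := by
      intro k
      have h1 : k % m < m := Nat.mod_lt _ (by omega)
      by_cases h : k % m + 1 = m
      · rw [if_pos h]
        rw [Nat.add_mod]
        rcases Nat.eq_or_lt_of_le hm with h2 | h2
        · simp [← h2, Nat.mod_one]
        · rw [Nat.mod_eq_of_lt h2, h, Nat.mod_self]
      · rw [if_neg h]
        rw [Nat.add_mod]
        have h2 : 2 ≤ m := by
          rcases Nat.eq_or_lt_of_le hm with h3 | h3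
          · exfalso; apply h; omega
          · omega
        rw [Nat.mod_eq_of_lt (show 1 < m by omega)]
        exact Nat.mod_eq_of_lt (by omega)
    have hUlink : ∀ k, pv q (pt (U (k + 1))) = pv q (U k) := by
      intro k
      have h1 : k % m < m := Nat.mod_lt _ (by omega)
      rw [hUdef]
      simp only
      rw [hmodsucc k]
      by_cases h : k % m + 1 = m
      · rw [if_pos h]
        have he1 : a + 0 = a := rfl
        have he2 : a + k % m = b - 1 := by omega
        rw [he1, he2, hvab]
        have := hlink (b - 1)
        have he3 : b - 1 + 1 = b := by omega
        rw [he3] at this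
        exact this
      · rw [if_neg h]
        have he : a + (k % m + 1) = a + k % m + 1 := by omega
        rw [he]
        exact hlink (a + k % m)
    have hUnoadj : ∀ k, U (k + 1) ≠ pt (U k) := by
      intro k
      have h1 : k % m < m := Nat.mod_lt _ (by omega)
      rw [hUdef]
      simp only
      rw [hmodsucc k]
      by_cases h : k % m + 1 = m
      · rw [if_pos h]
        have he1 : a + 0 = a := rfl
        have he2 : a + k % m = b - 1 := by omega
        rw [he1, he2]
        intro heq
        apply hnoadj (b - 1)
        have he3 : b - 1 + 1 = b := by omega
        rw [he3, ← hvab]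
        exact heq
      · rw [if_neg h]
        have he : a + (k % m + 1) = a + k % m + 1 := by omega
        rw [he]
        exact hnoadj (a + k % m)
    have hUmem : ∀ k, (U k).1 ∈ s := fun k => hmem _
    have hUdis : ∀ i j, i < j → j - i < m → U i ≠ U j := by
      intro i j hij hji heq
      have h1 : i % m = j % m := by
        have h2 : a + i % m < b := by
          have := Nat.mod_lt i (show 0 < m by omega)
          omega
        have h3 : a + j % m < b := by
          have := Nat.mod_lt j (show 0 < m by omega)
          omega
        by_contra hne
        rw [hUdef] at heq
        simp only at heq
        rcases Nat.lt_or_ge (i % m) (j % m) with h4 | h4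
        · exact hbd (a + i % m) (a + j % m) (by omega) h3 heq
        · exact hbd (a + j % m) (a + i % m) (by omega) h2 heq.symm
      have hdvd : m ∣ j - i := (Nat.modEq_iff_dvd' (le_of_lt hij)).1 h1
      have := Nat.le_of_dvd (by omega) hdvd
      omega
    by_cases hcf : ∃ t' t'', t'' < t' ∧ t' < m ∧ U t' = pt (U t'')
    · obtain ⟨t', t'', h1, h2, h3⟩ := hcf
      apply extract q s C U (2 * m) (t' - t'') (fun k _ => hUmem k)
        (fun k _ => hUlink k) (fun k _ => hUnoadj k)
      · intro d' a' i j hd1 hd2 hN hi hij hj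
        exact hUdis i j hij (by omega)
      · refine ⟨t'', by omega, by omega, ?_⟩
        have he : t'' + (t' - t'') = t' := by omega
        rw [he]
        exact h3
    · push_neg at hcf
      refine ⟨U, m, hm, fun t _ => hUmem t, ?_, fun t _ => hUlink t, ?_⟩
      · intro t ht t' ht' hedge
        by_contra hne
        rcases same_edge hedge with heq | heq
        · rcases Nat.lt_or_ge t t' with hlt | hge
          · exact hUdis t t' hlt (by omega) heq
          · exact hUdis t' t (by omega) (by omega) heq.symm
        · rcases Nat.lt_or_ge t t' with hlt | hge
          · apply hcf t' t hlt ht'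
            rw [heq, pt_pt]
          · exact hcf t t' (by omega) ht heq
      · left
        have := hUlink (m - 1)
        have he : m - 1 + 1 = m := by omega
        rw [he] at this
        have hU0 : U m = U 0 := by
          rw [hUdef]
          simp only [Nat.mod_self, Nat.zero_mod]
        rw [hU0] at this
        exact this

/-- Main auxiliary lemma, by strong induction on the number of active edges. -/
lemma aux (q : Fin r → Fin 2 → α) : ∀ n (s : Finset (Fin r)), s.card ≤ n → ∀ C : Set α,
    (∀ j ∈ s, ∀ i, q j i ∉ C →
      ∃ p' : Fin r × Fin 2, p'.1 ∈ s ∧ p' ≠ (j, i) ∧ q p'.1 p'.2 = q j i) →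
    ∃ κ : Fin r → Fin 2, ∀ j ∈ s, ∀ i : Fin 2,
      (q j i ∈ C ∨ ∃ j' ∈ s, q j' (κ j') = q j i) ∧
      (q j i ∈ C ∨ ∃ j' ∈ s, q j' (1 - κ j') = q j i) := by
  intro n
  induction n with
  | zero =>
    intro s hs C H1
    refine ⟨fun _ => 0, ?_⟩
    intro j hj i
    exfalso
    have : s = ∅ := Finset.card_eq_zero.mp (Nat.le_antisymm hs (Nat.zero_le _))
    rw [this] at hj
    simp at hj
  | succ n ih =>
    intro s hs C H1
    classical
    by_cases hNE : ∃ p : Fin r × Fin 2, p.1 ∈ s ∧ pv q p ∉ C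
    · obtain ⟨u, m, G⟩ := exists_goodChain q s C H1 hNE
      set O : Finset (Fin r) := (Finset.range m).image (fun t => (u t).1) with hOdef
      have hOmem : ∀ j, j ∈ O ↔ ∃ t, t < m ∧ (u t).1 = j := by
        intro j
        rw [hOdef]
        simp only [Finset.mem_image, Finset.mem_range]
      have hOs : O ⊆ s := by
        intro j hj
        obtain ⟨t, ht, he⟩ := (hOmem j).1 hj
        rw [← he]
        exact G.mem t ht
      set s' := s \ O with hs'def
      have hj0 : (u 0).1 ∈ O := (hOmem _).2 ⟨0, G.pos, rfl⟩
      have hss' : s'.card ≤ n := by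
        have hlt : s'.card < s.card := by
          apply Finset.card_lt_card
          constructor
          · exact Finset.sdiff_subset
          · intro hsub
            have h1 : (u 0).1 ∈ s := hOs hj0
            have h2 := hsub h1
            rw [hs'def, Finset.mem_sdiff] at h2
            exact h2.2 hj0
        omega
      set VO : Set α := {x | ∃ t, t < m ∧ (pv q (u t) = x ∨ pv q (pt (u t)) = x)} with hVOdef
      have H1' : ∀ j ∈ s', ∀ i, q j i ∉ (C ∪ VO) →
          ∃ p' : Fin r × Fin 2, p'.1 ∈ s' ∧ p' ≠ (j, i) ∧ q p'.1 p'.2 = q j i := by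
        intro j hj i hv
        rw [Set.mem_union] at hv
        push_neg at hv
        have hjs : j ∈ s := (Finset.mem_sdiff.1 hj).1
        obtain ⟨p', h1, h2, h3⟩ := H1 j hjs i hv.1
        refine ⟨p', ?_, h2, h3⟩
        rw [hs'def, Finset.mem_sdiff]
        refine ⟨h1, ?_⟩
        intro hpO
        obtain ⟨t, ht, hte⟩ := (hOmem _).1 hpO
        apply hv.2
        rw [hVOdef]
        refine ⟨t, ht, ?_⟩
        rcases same_edge hte.symm with he | he
        · left; rw [← he]; exact h3
        · right; rw [← he]; exact h3
      obtain ⟨κr, hκr⟩ := ih s' hss' (C ∪ VO) H1'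
      set κ : Fin r → Fin 2 := fun j =>
        if h : ∃ t, t < m ∧ (u t).1 = j then (u (Classical.choose h)).2 else κr j with hκdef
      have hκO : ∀ t < m, κ ((u t).1) = (u t).2 := by
        intro t ht
        have h : ∃ t', t' < m ∧ (u t').1 = (u t).1 := ⟨t, ht, rfl⟩
        rw [hκdef]
        simp only [dif_pos h]
        obtain ⟨h1, h2⟩ := Classical.choose_spec h
        rw [G.inj _ h1 t ht h2]
      have hκs' : ∀ j, ¬ (∃ t, t < m ∧ (u t).1 = j) → κ j = κr j := by
        intro j hj
        rw [hκdef]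
        simp only [dif_neg hj]
      have hhead : ∀ t < m, q (u t).1 (κ ((u t).1)) = pv q (u t) := by
        intro t ht
        rw [hκO t ht]
        rfl
      have htail : ∀ t < m, q (u t).1 (1 - κ ((u t).1)) = pv q (pt (u t)) := by
        intro t ht
        rw [hκO t ht]
        rfl
      have KO : ∀ x ∈ VO, (x ∈ C ∨ ∃ j' ∈ s, q j' (κ j') = x) ∧
          (x ∈ C ∨ ∃ j' ∈ s, q j' (1 - κ j') = x) := by
        rintro x ⟨t, ht, hcase⟩
        rcases hcase with he | he
        · constructor
          · right
            exact ⟨(u t).1, hOs ((hOmem _).2 ⟨t, ht, rfl⟩), by rw [hhead t ht, he]⟩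
          · by_cases ht1 : t + 1 < m
            · right
              refine ⟨(u (t + 1)).1, hOs ((hOmem _).2 ⟨t + 1, ht1, rfl⟩), ?_⟩
              rw [htail (t + 1) ht1, G.link t ht1, he]
            · have htm : t = m - 1 := by omega
              rcases G.ends with hE | hE
              · right
                refine ⟨(u 0).1, hOs hj0, ?_⟩
                rw [htail 0 G.pos, hE, ← htm, he]
              · left
                rw [← he, htm]
                exact hE.2
        · constructor
          · rcases Nat.eq_zero_or_pos t with ht0 | ht0
            · rcases G.ends with hE | hE
              · right
                refine ⟨(u (m - 1)).1, hOs ((hOmem _).2 ⟨m - 1, by omega, rfl⟩), ?_⟩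
                rw [hhead (m - 1) (by omega), ← hE, ← ht0, he]
              · left
                rw [← he, ht0]
                exact hE.1
            · right
              refine ⟨(u (t - 1)).1, hOs ((hOmem _).2 ⟨t - 1, by omega, rfl⟩), ?_⟩
              have := G.link (t - 1) (by omega)
              have het : t - 1 + 1 = t := by omega
              rw [het] at this
              rw [hhead (t - 1) (by omega), ← this, he]
          · right
            exact ⟨(u t).1, hOs ((hOmem _).2 ⟨t, ht, rfl⟩), by rw [htail t ht, he]⟩
      refine ⟨κ, ?_⟩
      intro j hj i
      by_cases hjO : ∃ t, t < m ∧ (u t).1 = j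
      · obtain ⟨t, ht, hte⟩ := hjO
        have hx : q j i ∈ VO := by
          rw [hVOdef]
          refine ⟨t, ht, ?_⟩
          rcases same_edge (show ((j, i) : Fin r × Fin 2).1 = (u t).1 from hte.symm) with he | he
          · left; rw [← he]; rfl
          · right; rw [← he]; rfl
        exact KO _ hx
      · have hjs' : j ∈ s' := by
          rw [hs'def, Finset.mem_sdiff]
          exact ⟨hj, fun hc => hjO ((hOmem j).1 hc)⟩
        obtain ⟨h1, h2⟩ := hκr j hjs' i
        have hlift : ∀ j' ∈ s', j' ∈ s ∧ κ j' = κr j' := by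
          intro j' hj'
          have hj'O : ¬ ∃ t, t < m ∧ (u t).1 = j' := fun hc =>
            (Finset.mem_sdiff.1 hj').2 ((hOmem j').2 hc)
          exact ⟨(Finset.mem_sdiff.1 hj').1, hκs' j' hj'O⟩
        constructor
        · rcases h1 with hw | hw
          · rcases hw with hw | hw
            · exact Or.inl hw
            · exact (KO _ hw).1
          · obtain ⟨j', hj', he⟩ := hw
            right
            exact ⟨j', (hlift j' hj').1, by rw [(hlift j' hj').2]; exact he⟩
        · rcases h2 with hw | hw
          · rcases hw with hw | hw
            · exact Or.inl hw
            · exact (KO _ hw).2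
          · obtain ⟨j', hj', he⟩ := hw
            right
            exact ⟨j', (hlift j' hj').1, by rw [(hlift j' hj').2]; exact he⟩
    · push_neg at hNE
      refine ⟨fun _ => 0, ?_⟩
      intro j hj i
      have : q j i ∈ C := by
        by_contra hc
        exact hc (hNE (j, i) hj)
      exact ⟨Or.inl this, Or.inl this⟩

end HallTwo

/-- Hall-type matching lemma: if the sequence `(q j i)_{j ∈ Fin r, i ∈ Fin 2}` does not
have the uniqueness property (every value is attained at least twice), then there is a
choice function `κ : Fin r → Fin 2` such that the values `q j (κ j)`, the values
`q j (1 - κ j)`, and all values `q j i` form the same set. -/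
theorem exists_choice_of_not_unique {α : Type*} (r : ℕ) (hr : 1 ≤ r)
    (q : Fin r → Fin 2 → α)
    (h : ∀ j i, ∃ j' i', (j', i') ≠ (j, i) ∧ q j' i' = q j i) :
    ∃ κ : Fin r → Fin 2,
      Set.range (fun j => q j (κ j)) = Set.range (fun j => q j (1 - κ j)) ∧
      Set.range (fun j => q j (κ j)) = {x | ∃ j i, q j i = x} := by
  classical
  have H1 : ∀ j ∈ (Finset.univ : Finset (Fin r)), ∀ i, q j i ∉ (∅ : Set α) →
      ∃ p' : Fin r × Fin 2, p'.1 ∈ (Finset.univ : Finset (Fin r)) ∧ p' ≠ (j, i) ∧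
        q p'.1 p'.2 = q j i := by
    intro j _ i _
    obtain ⟨j', i', hne, he⟩ := h j i
    exact ⟨(j', i'), Finset.mem_univ _, hne, he⟩
  obtain ⟨κ, hκ⟩ := HallTwo.aux q Finset.univ.card Finset.univ le_rfl ∅ H1
  have hall : Set.range (fun j => q j (κ j)) = {x | ∃ j i, q j i = x} := by
    ext x
    constructor
    · rintro ⟨j, rfl⟩
      exact ⟨j, κ j, rfl⟩
    · rintro ⟨j, i, rfl⟩
      obtain ⟨j', _, he⟩ :=
        (hκ j (Finset.mem_univ j) i).1.resolve_left (by simp)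
      exact ⟨j', he⟩
  have hall2 : Set.range (fun j => q j (1 - κ j)) = {x | ∃ j i, q j i = x} := by
    ext x
    constructor
    · rintro ⟨j, rfl⟩
      exact ⟨j, 1 - κ j, rfl⟩
    · rintro ⟨j, i, rfl⟩
      obtain ⟨j', _, he⟩ :=
        (hκ j (Finset.mem_univ j) i).2.resolve_left (by simp)
      exact ⟨j', he⟩
  exact ⟨κ, hall.trans hall2.symm, hall⟩
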